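/- arXiv:2509.23527 — 6 statements merged into one kernel-verified Lean document; each statement's English description precedes it below -/
import Mathlib

section
/- Let C, c > 0 and let R : ℕ × ℕ → ℝ satisfy |R(t+s, t)| ≤ C e^{−cs} for all t ≥ 0 and all s ≥ 1, and suppose that for each s ≥ 1 the limit ρ(s) := lim_{t→∞} R(t+s, t) exists. Then |ρ(s)| ≤ C e^{−cs} for all s ≥ 1, the series Σ_{s=1}^∞ ρ(s) converges absolutely, and lim_{t→∞} Σ_{s=0}^{t−1} R(t, s) = Σ_{s=1}^∞ ρ(s). -/
theorem stmt4 (C c : ℝ) (hC : 0 < C) (hc : 0 < c) (R : ℕ → ℕ → ℝ) (ρ : ℕ → ℝ)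
    (hbound : ∀ t s : ℕ, 1 ≤ s → |R (t + s) t| ≤ C * Real.exp (-c * s))
    (hlim : ∀ s : ℕ, 1 ≤ s →
      Filter.Tendsto (fun t => R (t + s) t) Filter.atTop (nhds (ρ s))) :
    (∀ s : ℕ, 1 ≤ s → |ρ s| ≤ C * Real.exp (-c * s)) ∧
      Summable (fun s : ℕ => |ρ (s + 1)|) ∧
      Filter.Tendsto (fun t => ∑ s ∈ Finset.range t, R t s) Filter.atTop
        (nhds (∑' s : ℕ, ρ (s + 1))) := by
  have hρ : ∀ s : ℕ, 1 ≤ s → |ρ s| ≤ C * Real.exp (-c * s) := by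
    intro s hs
    exact le_of_tendsto ((hlim s hs).abs)
      (Filter.Eventually.of_forall fun t => hbound t s hs)
  have hsum : Summable (fun u : ℕ => C * Real.exp (-c * (u + 1))) := by
    have : ∀ u : ℕ, C * Real.exp (-c * (u + 1))
        = (C * Real.exp (-c)) * (Real.exp (-c)) ^ u := by
      intro u
      rw [← Real.exp_nat_mul]
      rw [mul_assoc, ← Real.exp_add]
      ring_nf
    simp only [this]
    exact (summable_geometric_of_lt_one (Real.exp_nonneg _)
      (Real.exp_lt_one_iff.mpr (by linarith))).mul_left _
  have hρsum : Summable (fun s : ℕ => |ρ (s + 1)|) := by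
    apply Summable.of_nonneg_of_le (fun s => abs_nonneg _) _ hsum
    intro s
    have := hρ (s + 1) (by omega)
    simpa using this
  refine ⟨hρ, hρsum, ?_⟩
  set F : ℕ → ℕ → ℝ := fun t u => if u < t then R t (t - 1 - u) else 0 with hF
  have hrepr : ∀ t : ℕ, (∑ s ∈ Finset.range t, R t s) = ∑' u : ℕ, F t u := by
    intro t
    rw [tsum_eq_sum (s := Finset.range t)
      (by intro u hu; simp [hF, Finset.mem_range.not.mp hu])]
    rw [← Finset.sum_range_reflect]
    apply Finset.sum_congr rfl
    intro u hu
    simp only [hF, if_pos (Finset.mem_range.mp hu)]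
  have key : Filter.Tendsto (fun t => ∑' u : ℕ, F t u) Filter.atTop
      (nhds (∑' s : ℕ, ρ (s + 1))) := by
    apply tendsto_tsum_of_dominated_convergence hsum
    · intro u
      have h1 : Filter.Tendsto (fun t : ℕ => t - 1 - u) Filter.atTop Filter.atTop := by
        apply Filter.tendsto_atTop_atTop.mpr
        intro b
        exact ⟨b + 1 + u, fun a ha => by omega⟩
      have h2 := (hlim (u + 1) (by omega)).comp h1
      apply h2.congr'
      filter_upwards [Filter.eventually_ge_atTop (u + 1)] with t ht
      have : t - 1 - u + (u + 1) = t := by omega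
      simp [hF, Function.comp, this, show u < t by omega]
    · apply Filter.Eventually.of_forall
      intro t u
      simp only [hF, Real.norm_eq_abs]
      split
      · next h =>
        have ht : t = (t - 1 - u) + (u + 1) := by omega
        calc |R t (t - 1 - u)| = |R ((t - 1 - u) + (u + 1)) (t - 1 - u)| := by rw [← ht]
          _ ≤ C * Real.exp (-c * (u + 1)) := by
              have := hbound (t - 1 - u) (u + 1) (by omega)
              simpa using this
      · simpa using mul_nonneg hC.le (Real.exp_nonneg _)
  exact (Filter.tendsto_congr (fun t => hrepr t)).mpr key
end

section
/- Let E be a Banach space, let C, c > 0, let x∞ ∈ E and let (x_t)_{t≥0} be a sequence in E with ‖x_t − x∞‖ ≤ C e^{−ct} for all t ≥ 0. Let R : ℕ × ℕ → ℝ satisfy |R(t+s, t)| ≤ C e^{−cs} for all t ≥ 0 and s ≥ 1, and suppose that Σ_{s=0}^{t−1} R(t, s) converges to a real number ρ* as t → ∞. Then Σ_{s=0}^{t−1} R(t, s)·x_s converges to ρ*·x∞ in E as t → ∞. -/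
theorem stmt5 {E : Type*} [NormedAddCommGroup E] [NormedSpace ℝ E] [CompleteSpace E]
    (C c : ℝ) (hC : 0 < C) (hc : 0 < c) (xinf : E) (x : ℕ → E)
    (hx : ∀ t : ℕ, ‖x t - xinf‖ ≤ C * Real.exp (-c * t))
    (R : ℕ → ℕ → ℝ)
    (hR : ∀ t s : ℕ, 1 ≤ s → |R (t + s) t| ≤ C * Real.exp (-c * s))
    (ρstar : ℝ)
    (hρ : Filter.Tendsto (fun t => ∑ s ∈ Finset.range t, R t s) Filter.atTop (nhds ρstar)) :
    Filter.Tendsto (fun t => ∑ s ∈ Finset.range t, R t s • x s) Filter.atTop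
      (nhds (ρstar • xinf)) := by
  have hbound : ∀ t : ℕ, ‖∑ s ∈ Finset.range t, R t s • (x s - xinf)‖
      ≤ C ^ 2 * t * Real.exp (-c * t) := by
    intro t
    calc ‖∑ s ∈ Finset.range t, R t s • (x s - xinf)‖
        ≤ ∑ s ∈ Finset.range t, ‖R t s • (x s - xinf)‖ := norm_sum_le _ _
      _ ≤ ∑ s ∈ Finset.range t, C ^ 2 * Real.exp (-c * t) := by
          apply Finset.sum_le_sum
          intro s hs
          have hst := Finset.mem_range.mp hs
          rw [norm_smul, Real.norm_eq_abs]
          have h1 : |R t s| ≤ C * Real.exp (-c * (t - s : ℕ)) := by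
            have := hR s (t - s) (by omega)
            rwa [Nat.add_sub_cancel' hst.le] at this
          have h2 := hx s
          have hprod : |R t s| * ‖x s - xinf‖
              ≤ (C * Real.exp (-c * (t - s : ℕ))) * (C * Real.exp (-c * s)) := by
            exact mul_le_mul h1 h2 (norm_nonneg _)
              (by positivity)
          refine hprod.trans_eq ?_
          rw [Nat.cast_sub hst.le, mul_mul_mul_comm, ← Real.exp_add, sq]
          congr 1
          ring
      _ = C ^ 2 * t * Real.exp (-c * t) := by
          rw [Finset.sum_const, Finset.card_range, nsmul_eq_mul]
          ring
  have hzero : Filter.Tendsto (fun t : ℕ => C ^ 2 * t * Real.exp (-c * t))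
      Filter.atTop (nhds 0) := by
    have h1 : Filter.Tendsto (fun y : ℝ => y ^ 1 * Real.exp (-y)) Filter.atTop (nhds 0) :=
      Real.tendsto_pow_mul_exp_neg_atTop_nhds_zero 1
    have h2 : Filter.Tendsto (fun y : ℝ => c * y) Filter.atTop Filter.atTop :=
      Filter.Tendsto.const_mul_atTop hc Filter.tendsto_id
    have h3 : Filter.Tendsto (fun y : ℝ => (c * y) ^ 1 * Real.exp (-(c * y)))
        Filter.atTop (nhds 0) := h1.comp h2
    have h4 : Filter.Tendsto (fun y : ℝ => C ^ 2 * y * Real.exp (-c * y))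
        Filter.atTop (nhds 0) := by
      have := h3.const_mul (C ^ 2 / c)
      rw [mul_zero] at this
      refine this.congr (fun y => ?_)
      field_simp
    exact h4.comp tendsto_natCast_atTop_atTop
  have key : Filter.Tendsto (fun t : ℕ => ∑ s ∈ Finset.range t, R t s • (x s - xinf))
      Filter.atTop (nhds 0) :=
    squeeze_zero_norm hbound hzero
  have hmain := key.add (hρ.smul_const xinf)
  rw [zero_add] at hmain
  refine hmain.congr (fun t => ?_)
  rw [Finset.sum_smul]
  rw [← Finset.sum_add_distrib]
  congr 1
  funext s
  rw [smul_sub]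
  abel
end

section
/- Let X be a real n×d matrix, η*, z ∈ ℝ^n, γ, λ ∈ ℝ, and let ℓ : ℝ³ → ℝ be such that a ↦ ℓ(a,b,c) is differentiable for every (b,c), with derivative ∂₁ℓ. Fix s ∈ ℕ, j ∈ {1,…,d}, θ_init ∈ ℝ^d, and for each ε ∈ ℝ define the sequence (θ^{t,ε})_{t≥0} in ℝ^d by θ^{0,ε} = θ_init and θ^{t+1,ε} = θ^{t,ε} − γ( Xᵀ ℓ(Xθ^{t,ε}, η*, z) + λ θ^{t,ε} ) + γ ε 1{t = s} e_j, where e_j is the j-th standard basis vector. Write θ^t := θ^{t,0}, D^k := diag( ∂₁ℓ((Xθ^k)_i, η*_i, z_i) )_{i=1}^n and Ω^k := (1−γλ) I_d − γ Xᵀ D^k X. Then for every t ≥ s+1, the map ε ↦ θ^{t,ε} is differentiable at ε = 0 with derivative γ · Ω^{t−1} Ω^{t−2} ⋯ Ω^{s+1} e_j, where the empty product (for t = s+1) is I_d. -/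
open Matrix

lemma hasDerivAt_euclid {d : ℕ} {f : ℝ → EuclideanSpace ℝ (Fin d)} {y : EuclideanSpace ℝ (Fin d)} {x : ℝ} :
    HasDerivAt f y x ↔ ∀ i, HasDerivAt (fun t => f t i) (y i) x := by
  constructor
  · intro h i
    have := (EuclideanSpace.proj i : EuclideanSpace ℝ (Fin d) →L[ℝ] ℝ).hasFDerivAt.comp_hasDerivAt x h
    exact this
  · intro h
    have h1 : HasDerivAt (fun t i => f t i) (fun i => y i) x := hasDerivAt_pi.2 h
    exact ((EuclideanSpace.equiv (Fin d) ℝ).symm.hasFDerivAt (x := fun i => f x i)).comp_hasDerivAt x h1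

lemma teu_apply {n d : ℕ} (X : Matrix (Fin n) (Fin d) ℝ) (v : EuclideanSpace ℝ (Fin d)) (i : Fin n) :
    Matrix.toEuclideanLin X v i = ∑ k, X i k * v k := rfl

lemma teu_sq_apply {d : ℕ} (M : Matrix (Fin d) (Fin d) ℝ) (v : EuclideanSpace ℝ (Fin d)) (i : Fin d) :
    Matrix.toEuclideanLin M v i = ∑ k, M i k * v k := rfl

lemma teu_mul {d : ℕ} (A B : Matrix (Fin d) (Fin d) ℝ) (v : EuclideanSpace ℝ (Fin d)) :
    Matrix.toEuclideanLin (A * B) v = Matrix.toEuclideanLin A (Matrix.toEuclideanLin B v) := by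
  simp only [Matrix.toEuclideanLin_apply]
  congr 1
  rw [← Matrix.mulVec_mulVec]

theorem stmt12 (n d : ℕ) (X : Matrix (Fin n) (Fin d) ℝ)
    (ηs z : Fin n → ℝ) (γ lam : ℝ)
    (ℓ dℓ : ℝ → ℝ → ℝ → ℝ)
    (hdiff : ∀ a b c : ℝ, HasDerivAt (fun a' => ℓ a' b c) (dℓ a b c) a)
    (s : ℕ) (j : Fin d) (θinit : EuclideanSpace ℝ (Fin d))
    (θ : ℝ → ℕ → EuclideanSpace ℝ (Fin d))
    (hinit : ∀ ε : ℝ, θ ε 0 = θinit)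
    (hrec : ∀ (ε : ℝ) (t : ℕ), θ ε (t + 1) =
      θ ε t -
        γ • (Matrix.toEuclideanLin Xᵀ
              (WithLp.toLp 2 (fun i => ℓ (Matrix.toEuclideanLin X (θ ε t) i) (ηs i) (z i))) +
            lam • θ ε t) +
        (γ * ε * (if t = s then 1 else 0)) • EuclideanSpace.single j 1) :
    ∀ t : ℕ, s + 1 ≤ t →
      HasDerivAt (fun ε => θ ε t)
        (γ •
          Matrix.toEuclideanLin
            (((List.range (t - 1 - s)).map (fun k =>
              (1 - γ * lam) • (1 : Matrix (Fin d) (Fin d) ℝ) -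
                γ • (Xᵀ * Matrix.diagonal (fun i =>
                    dℓ (Matrix.toEuclideanLin X (θ 0 (t - 1 - k)) i) (ηs i) (z i)) * X))).prod)
            (EuclideanSpace.single j 1))
        0 := by
  set Ω : EuclideanSpace ℝ (Fin d) → Matrix (Fin d) (Fin d) ℝ := fun v =>
    (1 - γ * lam) • (1 : Matrix (Fin d) (Fin d) ℝ) -
      γ • (Xᵀ * Matrix.diagonal (fun i =>
          dℓ (Matrix.toEuclideanLin X v i) (ηs i) (z i)) * X) with hΩ
  have hconst : ∀ (ε : ℝ) (t : ℕ), t ≤ s → θ ε t = θ 0 t := by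
    intro ε t
    induction t with
    | zero => intro _; rw [hinit, hinit]
    | succ t ih =>
      intro h
      have ht : ¬ (t = s) := by omega
      rw [hrec, hrec, ih (by omega)]
      simp [ht]
  intro t ht
  obtain ⟨m, rfl⟩ := Nat.exists_eq_add_of_le ht
  clear ht
  induction m with
  | zero =>
    have h0 : s + 1 + 0 - 1 - s = 0 := by omega
    rw [h0]
    simp only [List.range_zero, List.map_nil, List.prod_nil]
    rw [hasDerivAt_euclid]
    intro i
    have hval : ∀ ε : ℝ, θ ε (s + 1 + 0) i =
        (θ 0 s - γ • (Matrix.toEuclideanLin Xᵀ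
              (WithLp.toLp 2 (fun k => ℓ (Matrix.toEuclideanLin X (θ 0 s) k) (ηs k) (z k))) +
            lam • θ 0 s)) i + γ * (EuclideanSpace.single j 1 : EuclideanSpace ℝ (Fin d)) i * ε := by
      intro ε
      have h1 : θ ε (s + 1 + 0) = θ ε (s + 1) := rfl
      rw [h1, hrec, hconst ε s le_rfl]
      simp [PiLp.add_apply, PiLp.smul_apply]
    have hd : HasDerivAt (fun ε : ℝ => (θ 0 s - γ • (Matrix.toEuclideanLin Xᵀ
              (WithLp.toLp 2 (fun k => ℓ (Matrix.toEuclideanLin X (θ 0 s) k) (ηs k) (z k))) +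
            lam • θ 0 s)) i + γ * (EuclideanSpace.single j 1 : EuclideanSpace ℝ (Fin d)) i * ε)
        (γ * (EuclideanSpace.single j 1 : EuclideanSpace ℝ (Fin d)) i) 0 := by
      simpa using
        (((hasDerivAt_id (0:ℝ)).const_mul (γ * (EuclideanSpace.single j 1 : EuclideanSpace ℝ (Fin d)) i)))
    rw [funext hval]
    convert hd using 1
    simp [teu_sq_apply, PiLp.smul_apply, Matrix.one_apply]
  | succ m ih =>
    set T := s + 1 + m with hT
    set fnew : ℕ → Matrix (Fin d) (Fin d) ℝ := fun k => Ω (θ 0 (s + 1 + (m + 1) - 1 - k)) with hfnew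
    set fold : ℕ → Matrix (Fin d) (Fin d) ℝ := fun k => Ω (θ 0 (T - 1 - k)) with hfold
    have hrange : s + 1 + (m + 1) - 1 - s = m + 1 := by omega
    have hrangeold : T - 1 - s = m := by omega
    rw [hrange]
    rw [hrangeold] at ih
    have hprod : ((List.range (m + 1)).map fnew).prod = Ω (θ 0 T) * ((List.range m).map fold).prod := by
      rw [List.range_succ_eq_map, List.map_cons, List.prod_cons, List.map_map]
      have h1 : fnew ∘ Nat.succ = fold := by
        funext k
        show Ω (θ 0 (s + 1 + (m + 1) - 1 - (Nat.succ k))) = Ω (θ 0 (T - 1 - k))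
        have hk : s + 1 + (m + 1) - 1 - (Nat.succ k) = T - 1 - k := by omega
        rw [hk]
      have h2 : fnew 0 = Ω (θ 0 T) := by
        show Ω (θ 0 (s + 1 + (m + 1) - 1 - 0)) = Ω (θ 0 T)
        have hk : s + 1 + (m + 1) - 1 - 0 = T := by omega
        rw [hk]
      rw [h1, h2]
    rw [hprod]
    set P : Matrix (Fin d) (Fin d) ℝ := ((List.range m).map fold).prod with hP
    set D : EuclideanSpace ℝ (Fin d) := γ • Matrix.toEuclideanLin P (EuclideanSpace.single j 1) with hD
    have hDi := hasDerivAt_euclid.1 ih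
    rw [hasDerivAt_euclid]
    intro i
    have hTs : ¬ (T = s) := by omega
    have hval : ∀ ε : ℝ, θ ε (s + 1 + (m + 1)) i =
        θ ε T i - γ * ((∑ k, X k i * ℓ (∑ l, X k l * θ ε T l) (ηs k) (z k)) + lam * θ ε T i) := by
      intro ε
      have h1 : θ ε (s + 1 + (m + 1)) = θ ε (T + 1) := rfl
      rw [h1, hrec]
      simp [hTs, PiLp.sub_apply, PiLp.add_apply, PiLp.smul_apply, teu_apply, Matrix.transpose_apply,
        Matrix.mulVec, dotProduct]
      ring
    have hder : HasDerivAt (fun ε => θ ε T i - γ * ((∑ k, X k i * ℓ (∑ l, X k l * θ ε T l) (ηs k) (z k)) + lam * θ ε T i))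
        (D i - γ * ((∑ k, X k i * (dℓ (∑ l, X k l * θ 0 T l) (ηs k) (z k) * (∑ l, X k l * D l))) + lam * D i)) 0 := by
      have inner : ∀ k, HasDerivAt (fun ε => ∑ l, X k l * θ ε T l) (∑ l, X k l * D l) 0 :=
        fun k => HasDerivAt.fun_sum fun l _ => (hDi l).const_mul (X k l)
      have comp : ∀ k, HasDerivAt (fun ε => ℓ (∑ l, X k l * θ ε T l) (ηs k) (z k))
          (dℓ (∑ l, X k l * θ 0 T l) (ηs k) (z k) * (∑ l, X k l * D l)) 0 :=
        fun k => (hdiff _ (ηs k) (z k)).comp 0 (inner k)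
      have hsum : HasDerivAt (fun ε => ∑ k, X k i * ℓ (∑ l, X k l * θ ε T l) (ηs k) (z k))
          (∑ k, X k i * (dℓ (∑ l, X k l * θ 0 T l) (ηs k) (z k) * (∑ l, X k l * D l))) 0 :=
        HasDerivAt.fun_sum fun k _ => (comp k).const_mul (X k i)
      exact (hDi i).sub ((hsum.add ((hDi i).const_mul lam)).const_mul γ)
    have hΩapp : ∀ (i l : Fin d), Ω (θ 0 T) i l =
        (1 - γ * lam) * (if i = l then 1 else 0) -
          γ * ∑ k, X k i * (dℓ (∑ r, X k r * θ 0 T r) (ηs k) (z k) * X k l) := by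
      intro i l
      simp [hΩ, Matrix.sub_apply, Matrix.smul_apply, Matrix.one_apply, Matrix.mul_apply,
        Matrix.diagonal_apply, Matrix.transpose_apply, teu_apply, Finset.mul_sum,
        Finset.sum_ite_eq, mul_assoc]
    have hbridge : (γ • Matrix.toEuclideanLin (Ω (θ 0 T) * P) (EuclideanSpace.single j 1) : EuclideanSpace ℝ (Fin d))
        = Matrix.toEuclideanLin (Ω (θ 0 T)) D := by
      rw [teu_mul, hD, _root_.map_smul]
    have key : (Matrix.toEuclideanLin (Ω (θ 0 T)) D) i =
        D i - γ * ((∑ k, X k i * (dℓ (∑ l, X k l * θ 0 T l) (ηs k) (z k) * (∑ l, X k l * D l))) + lam * D i) := by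
      rw [teu_sq_apply]
      simp only [hΩapp, sub_mul, Finset.sum_sub_distrib]
      have h1a : ∑ l, (1 * if i = l then 1 else 0) * D l = D i := by
        simp [ite_mul, mul_ite]
      have h1b : ∑ l, ((γ * lam) * if i = l then 1 else 0) * D l = γ * lam * D i := by
        simp [ite_mul, mul_ite]
      have h2 : ∑ l, (γ * ∑ k, X k i * (dℓ (∑ r, X k r * θ 0 T r) (ηs k) (z k) * X k l)) * D l
          = γ * ∑ k, X k i * (dℓ (∑ l, X k l * θ 0 T l) (ηs k) (z k) * (∑ l, X k l * D l)) := by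
        simp only [mul_assoc, ← Finset.mul_sum]
        congr 1
        simp only [Finset.sum_mul]
        rw [Finset.sum_comm]
        simp only [Finset.mul_sum]
        exact Finset.sum_congr rfl fun k _ => Finset.sum_congr rfl fun l _ => by ring
      rw [h1a, h1b, h2]
      ring
    rw [funext hval]
    have hgoal : (γ • Matrix.toEuclideanLin (Ω (θ 0 T) * P) (EuclideanSpace.single j 1) : EuclideanSpace ℝ (Fin d)) i =
        D i - γ * ((∑ k, X k i * (dℓ (∑ l, X k l * θ 0 T l) (ηs k) (z k) * (∑ l, X k l * D l))) + lam * D i) := by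
      rw [hbridge]; exact key
    rw [hgoal]
    exact hder
end

section
/- Let X be a real n×d matrix, η*, z ∈ ℝ^n, γ, λ ∈ ℝ, and let ℓ : ℝ³ → ℝ be such that a ↦ ℓ(a,b,c) is differentiable for every (b,c), with derivative ∂₁ℓ. Fix s ∈ ℕ, i ∈ {1,…,n}, θ_init ∈ ℝ^d. Write θ^t for the unperturbed sequence (ε = 0 below), D^k := diag( ∂₁ℓ((Xθ^k)_r, η*_r, z_r) )_{r=1}^n and Ω^k := (1−γλ) I_d − γ Xᵀ D^k X. For each ε ∈ ℝ define (θ^{t,ε})_{t≥0} by θ^{0,ε} = θ_init and θ^{t+1,ε} = θ^{t,ε} − γ( Xᵀ ℓ(Xθ^{t,ε}, η*, z) + λ θ^{t,ε} − ε 1{t = s} Xᵀ D^s e_i ), where e_i is the i-th standard basis vector of ℝ^n. Then for every t ≥ s+1, the map ε ↦ X θ^{t,ε} is differentiable at ε = 0 with derivative γ · X Ω^{t−1} Ω^{t−2} ⋯ Ω^{s+1} Xᵀ D^s e_i, where the empty product (for t = s+1) is I_d. -/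
open Matrix

lemma hasDerivAt_euclidean {N : ℕ} {f : ℝ → EuclideanSpace ℝ (Fin N)} {v : EuclideanSpace ℝ (Fin N)} {x : ℝ} :
    HasDerivAt f v x ↔ ∀ r, HasDerivAt (fun t => f t r) (v r) x := by
  constructor
  · intro h r
    have h2 := ((EuclideanSpace.equiv (Fin N) ℝ).toContinuousLinearMap.hasFDerivAt).comp_hasDerivAt x h
    have h3 : HasDerivAt (fun t => (EuclideanSpace.equiv (Fin N) ℝ) (f t))
        ((EuclideanSpace.equiv (Fin N) ℝ) v) x := h2
    exact hasDerivAt_pi.1 h3 r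
  · intro h
    have h2 : HasDerivAt (fun t => ((EuclideanSpace.equiv (Fin N) ℝ) (f t)))
        ((EuclideanSpace.equiv (Fin N) ℝ) v) x := hasDerivAt_pi.2 h
    have h3 := ((EuclideanSpace.equiv (Fin N) ℝ).symm.toContinuousLinearMap.hasFDerivAt).comp_hasDerivAt x h2
    have h4 : (⇑(EuclideanSpace.equiv (Fin N) ℝ).symm ∘ fun t => (EuclideanSpace.equiv (Fin N) ℝ) (f t)) = f := by
      funext t; simp
    simp only [ContinuousLinearEquiv.coe_coe, ContinuousLinearEquiv.symm_apply_apply] at h3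
    rw [h4] at h3
    exact h3

lemma hasDerivAt_toEuclideanLin {N M : ℕ} (A : Matrix (Fin M) (Fin N) ℝ)
    {u : ℝ → EuclideanSpace ℝ (Fin N)} {w : EuclideanSpace ℝ (Fin N)} {x : ℝ}
    (h : HasDerivAt u w x) :
    HasDerivAt (fun t => Matrix.toEuclideanLin A (u t)) (Matrix.toEuclideanLin A w) x := by
  have := ((LinearMap.toContinuousLinearMap (Matrix.toEuclideanLin A)).hasFDerivAt).comp_hasDerivAt x h
  exact this

lemma tEL_mul {a b c : ℕ} (A : Matrix (Fin a) (Fin b) ℝ) (B : Matrix (Fin b) (Fin c) ℝ)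
    (v : EuclideanSpace ℝ (Fin c)) :
    Matrix.toEuclideanLin (A * B) v = Matrix.toEuclideanLin A (Matrix.toEuclideanLin B v) := by
  simp [Matrix.toEuclideanLin_apply, Matrix.mulVec_mulVec]

lemma tEL_diag {a : ℕ} (dr : Fin a → ℝ) (u : EuclideanSpace ℝ (Fin a)) :
    Matrix.toEuclideanLin (Matrix.diagonal dr) u = (fun r => dr r * u r : Fin a → ℝ) := by
  funext r
  simp [Matrix.toEuclideanLin_apply, Matrix.mulVec_diagonal]

set_option maxHeartbeats 1000000 in
theorem stmt13 (n d : ℕ) (X : Matrix (Fin n) (Fin d) ℝ)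
    (ηs z : Fin n → ℝ) (γ lam : ℝ)
    (ℓ dℓ : ℝ → ℝ → ℝ → ℝ)
    (hdiff : ∀ a b c : ℝ, HasDerivAt (fun a' => ℓ a' b c) (dℓ a b c) a)
    (s : ℕ) (i : Fin n) (θinit : EuclideanSpace ℝ (Fin d))
    (θ : ℝ → ℕ → EuclideanSpace ℝ (Fin d))
    (hinit : ∀ ε : ℝ, θ ε 0 = θinit)
    (hrec : ∀ (ε : ℝ) (t : ℕ), θ ε (t + 1) =
      θ ε t -
        γ • (Matrix.toEuclideanLin Xᵀ
              (WithLp.toLp 2 (fun r => ℓ (Matrix.toEuclideanLin X (θ ε t) r) (ηs r) (z r))) +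
            lam • θ ε t -
            (ε * (if t = s then 1 else 0)) •
              Matrix.toEuclideanLin
                (Xᵀ * Matrix.diagonal (fun r =>
                  dℓ (Matrix.toEuclideanLin X (θ 0 s) r) (ηs r) (z r)))
                (EuclideanSpace.single i 1))) :
    ∀ t : ℕ, s + 1 ≤ t →
      HasDerivAt (fun ε => Matrix.toEuclideanLin X (θ ε t))
        (γ •
          Matrix.toEuclideanLin
            (X *
              (((List.range (t - 1 - s)).map (fun k =>
                (1 - γ * lam) • (1 : Matrix (Fin d) (Fin d) ℝ) -
                  γ • (Xᵀ * Matrix.diagonal (fun r =>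
                      dℓ (Matrix.toEuclideanLin X (θ 0 (t - 1 - k)) r) (ηs r) (z r)) * X))).prod) *
              Xᵀ *
              Matrix.diagonal (fun r => dℓ (Matrix.toEuclideanLin X (θ 0 s) r) (ηs r) (z r)))
            (EuclideanSpace.single i 1))
        0 := by
  -- notation
  set Dm : Matrix (Fin n) (Fin n) ℝ :=
    Matrix.diagonal (fun r => dℓ (Matrix.toEuclideanLin X (θ 0 s) r) (ηs r) (z r)) with hDm
  set Ω : ℕ → Matrix (Fin d) (Fin d) ℝ := fun j =>
    (1 - γ * lam) • (1 : Matrix (Fin d) (Fin d) ℝ) -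
      γ • (Xᵀ * Matrix.diagonal (fun r =>
        dℓ (Matrix.toEuclideanLin X (θ 0 j) r) (ηs r) (z r)) * X) with hΩ
  set Q : ℕ → Matrix (Fin d) (Fin d) ℝ := fun m =>
    ((List.range m).map (fun k => Ω (s + m - k))).prod with hQ
  set e : EuclideanSpace ℝ (Fin n) := EuclideanSpace.single i 1 with he
  -- for t ≤ s, θ ε t is constant in ε
  have hconst : ∀ t : ℕ, t ≤ s → ∀ ε : ℝ, θ ε t = θ 0 t := by
    intro t
    induction t with
    | zero => intro _ ε; rw [hinit, hinit]
    | succ t ih =>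
      intro ht ε
      have ht' : t ≠ s := by omega
      rw [hrec ε t, hrec 0 t, ih (by omega) ε]
      simp [ht']
  -- key induction
  have key : ∀ m : ℕ,
      HasDerivAt (fun ε => θ ε (s + 1 + m))
        (γ • Matrix.toEuclideanLin (Q m * Xᵀ * Dm) e) 0 := by
    intro m
    induction m with
    | zero =>
      have hfun : (fun ε => θ ε (s + 1)) =
          fun ε : ℝ => (θ 0 s - γ • (Matrix.toEuclideanLin Xᵀ
              (WithLp.toLp 2 (fun r => ℓ (Matrix.toEuclideanLin X (θ 0 s) r) (ηs r) (z r))) +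
              lam • θ 0 s)) + ε • (γ • Matrix.toEuclideanLin (Xᵀ * Dm) e) := by
        funext ε
        rw [hrec ε s, hconst s le_rfl ε]
        rw [if_pos rfl, mul_one]
        module
      have hd : HasDerivAt (fun ε : ℝ => (θ 0 s - γ • (Matrix.toEuclideanLin Xᵀ
              (WithLp.toLp 2 (fun r => ℓ (Matrix.toEuclideanLin X (θ 0 s) r) (ηs r) (z r))) +
              lam • θ 0 s)) + ε • (γ • Matrix.toEuclideanLin (Xᵀ * Dm) e))
          (γ • Matrix.toEuclideanLin (Xᵀ * Dm) e) 0 := by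
        simpa using (((hasDerivAt_id (0:ℝ)).smul_const
          (γ • Matrix.toEuclideanLin (Xᵀ * Dm) e)).const_add (θ 0 s - γ • (Matrix.toEuclideanLin Xᵀ
              (WithLp.toLp 2 (fun r => ℓ (Matrix.toEuclideanLin X (θ 0 s) r) (ηs r) (z r))) +
              lam • θ 0 s)))
      rw [show s + 1 + 0 = s + 1 from rfl, hfun]
      convert hd using 2
      simp [hQ]
    | succ m ih =>
      set t := s + 1 + m with htdef
      have htne : t ≠ s := by omega
      set u : EuclideanSpace ℝ (Fin d) := Matrix.toEuclideanLin (Q m * Xᵀ * Dm) e with hu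
      set dt : Fin n → ℝ := fun r => dℓ (Matrix.toEuclideanLin X (θ 0 t) r) (ηs r) (z r) with hdt
      -- coordinatewise derivative of X θ ε t
      have hX : HasDerivAt (fun ε => Matrix.toEuclideanLin X (θ ε t))
          (Matrix.toEuclideanLin X (γ • u)) 0 := hasDerivAt_toEuclideanLin X ih
      have hcoord : ∀ r, HasDerivAt (fun ε => Matrix.toEuclideanLin X (θ ε t) r)
          (Matrix.toEuclideanLin X (γ • u) r) 0 := hasDerivAt_euclidean.1 hX
      have hchain : ∀ r, HasDerivAt
          (fun ε => ℓ (Matrix.toEuclideanLin X (θ ε t) r) (ηs r) (z r))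
          (dt r * Matrix.toEuclideanLin X (γ • u) r) 0 := by
        intro r
        exact (hdiff (Matrix.toEuclideanLin X (θ 0 t) r) (ηs r) (z r)).comp 0 (hcoord r)
      have hg := (hasDerivAt_euclidean
          (f := fun ε => WithLp.toLp 2 (fun r => ℓ (Matrix.toEuclideanLin X (θ ε t) r) (ηs r) (z r)))
          (v := WithLp.toLp 2 (fun r => dt r * Matrix.toEuclideanLin X (γ • u) r))).2 hchain
      have hXt := hasDerivAt_toEuclideanLin Xᵀ hg
      have hfun : (fun ε => θ ε (t + 1)) = fun ε =>
          θ ε t - γ • (Matrix.toEuclideanLin Xᵀ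
            (WithLp.toLp 2 (fun r => ℓ (Matrix.toEuclideanLin X (θ ε t) r) (ηs r) (z r))) +
            lam • θ ε t) := by
        funext ε
        rw [hrec ε t]
        simp [htne]
      have hd : HasDerivAt (fun ε => θ ε (t + 1))
          ((γ • u) - γ • (Matrix.toEuclideanLin Xᵀ
            (WithLp.toLp 2 (fun r => dt r * Matrix.toEuclideanLin X (γ • u) r)) +
            lam • (γ • u))) 0 := by
        rw [hfun]
        exact ih.sub ((hXt.add (ih.const_smul lam)).const_smul γ)
      have hQsucc : Q (m + 1) = Ω t * Q m := by
        rw [hQ, htdef]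
        simp only [List.range_succ_eq_map, List.map_cons, List.map_map, List.prod_cons]
        have e1 : s + (m + 1) - 0 = s + 1 + m := by omega
        have e2 : ((fun k => Ω (s + (m + 1) - k)) ∘ Nat.succ) = fun k => Ω (s + m - k) := by
          funext k
          have : s + (m + 1) - (k + 1) = s + m - k := by omega
          simp [Function.comp, this]
        rw [e1, e2]
      have hval : (γ • u) - γ • (Matrix.toEuclideanLin Xᵀ
            (WithLp.toLp 2 (fun r => dt r * Matrix.toEuclideanLin X (γ • u) r)) +
            lam • (γ • u)) =
          γ • Matrix.toEuclideanLin (Q (m + 1) * Xᵀ * Dm) e := by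
        have h1 : Matrix.toEuclideanLin Xᵀ
            (WithLp.toLp 2 (fun r => dt r * Matrix.toEuclideanLin X (γ • u) r)) =
            γ • Matrix.toEuclideanLin (Xᵀ * Matrix.diagonal dt * X) u := by
          rw [tEL_mul, tEL_mul, ← tEL_diag dt]
          simp only [_root_.map_smul]
          simp only [WithLp.toLp_ofLp, _root_.map_smul]
        have hΩu : Matrix.toEuclideanLin (Ω t) u =
            (1 - γ * lam) • u - γ • Matrix.toEuclideanLin (Xᵀ * Matrix.diagonal dt * X) u := by
          rw [hΩ]
          simp only [← hdt]
          ext r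
          simp [Matrix.toEuclideanLin_apply, Matrix.sub_mulVec, Matrix.smul_mulVec,
            Matrix.one_mulVec]
        have h2 : Q (m + 1) * Xᵀ * Dm = Ω t * (Q m * Xᵀ * Dm) := by
          rw [hQsucc]; simp only [Matrix.mul_assoc]
        rw [h1, h2, tEL_mul (Ω t) (Q m * Xᵀ * Dm) e, ← hu, hΩu]
        module
      rw [show s + 1 + (m + 1) = t + 1 from by omega]
      rw [← hval]
      exact hd
  -- conclude
  intro t ht
  obtain ⟨m, rfl⟩ : ∃ m, t = s + 1 + m := ⟨t - s - 1, by omega⟩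
  have hk := hasDerivAt_toEuclideanLin X (key m)
  have hlist : ((List.range (s + 1 + m - 1 - s)).map (fun k =>
      (1 - γ * lam) • (1 : Matrix (Fin d) (Fin d) ℝ) -
        γ • (Xᵀ * Matrix.diagonal (fun r =>
          dℓ (Matrix.toEuclideanLin X (θ 0 (s + 1 + m - 1 - k)) r) (ηs r) (z r)) * X))).prod
      = Q m := by
    rw [hQ]
    congr 1
    have : s + 1 + m - 1 - s = m := by omega
    rw [this]
    congr 1
    funext k
    have hk : s + 1 + m - 1 - k = s + m - k := by omega
    rw [hk, hΩ]
  rw [hlist]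
  have hmerge : γ • Matrix.toEuclideanLin (X * Q m * Xᵀ * Dm) e =
      Matrix.toEuclideanLin X (γ • Matrix.toEuclideanLin (Q m * Xᵀ * Dm) e) := by
    rw [_root_.map_smul]
    congr 1
    rw [show X * Q m * Xᵀ * Dm = X * (Q m * Xᵀ * Dm) by simp only [Matrix.mul_assoc]]
    rw [tEL_mul]
  rw [hmerge]
  exact hk
end

section
/- Let (Ω, F, P) be a probability space and let w*, z, y, w⁰, (η^t)_{t≥0}, (w^t)_{t≥0} be real random variables in L²(P). Let ℓ : ℝ³ → ℝ be Lipschitz and 𝒯 : ℝ → ℝ bounded and measurable, and let R_θ(t,s) (t > s ≥ 0) and R_♦(t) (t ≥ 0) be real numbers. Suppose: (i) for every t ≥ 0, η^t = −Σ_{s=0}^{t−1} ℓ(η^s, w*, z)·R_θ(t,s) + 𝒯(y)·w⁰·R_♦(t) + w^t almost surely; (ii) there exist η^∞, w^∞ ∈ L²(P) and constants C, c > 0 with ‖η^t − η^∞‖_{L²} ≤ C e^{−ct} and ‖w^t − w^∞‖_{L²} ≤ C e^{−ct} for all t; (iii) R_♦(t) → 0 as t → ∞; (iv) |R_θ(t+s,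 t)| ≤ C e^{−cs} for all t ≥ 0, s ≥ 1, and for each s ≥ 1 the limit R(s) := lim_{t→∞} R_θ(t+s, t) exists. Then the series R^∞ := Σ_{s=1}^∞ R(s) converges absolutely and η^∞ = −R^∞ · ℓ(η^∞, w*, z) + w^∞ almost surely. -/
open MeasureTheory Filter
open scoped ENNReal NNReal

-- scalar helper lemmas
lemma aux_exp_geom (C c : ℝ) (hc : 0 < c) :
    Summable (fun s : ℕ => C * Real.exp (-c * (s + 1))) := by
  have h1 : Real.exp (-c) < 1 := Real.exp_lt_one_iff.mpr (by linarith)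
  have h0 : (0:ℝ) ≤ Real.exp (-c) := Real.exp_nonneg _
  have := (summable_geometric_of_lt_one h0 h1).mul_left (C * Real.exp (-c))
  refine this.congr fun s => ?_
  rw [← Real.exp_nat_mul, mul_assoc, ← Real.exp_add]
  congr 1
  ring_nf

lemma aux_exp_tendsto (C c : ℝ) (hc : 0 < c) :
    Tendsto (fun t : ℕ => C * Real.exp (-c * t)) atTop (nhds 0) := by
  have h1 : Real.exp (-c) < 1 := Real.exp_lt_one_iff.mpr (by linarith)
  have h0 : (0:ℝ) ≤ Real.exp (-c) := Real.exp_nonneg _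
  have := (tendsto_pow_atTop_nhds_zero_of_lt_one h0 h1).const_mul C
  rw [mul_zero] at this
  refine this.congr fun t => ?_
  rw [← Real.exp_nat_mul]; ring_nf

lemma aux_texp_tendsto (C c : ℝ) (hc : 0 < c) :
    Tendsto (fun t : ℕ => (t : ℝ) * (C * Real.exp (-c * t))) atTop (nhds 0) := by
  have h1 : Real.exp (-c) < 1 := Real.exp_lt_one_iff.mpr (by linarith)
  have h0 : (0:ℝ) ≤ Real.exp (-c) := Real.exp_nonneg _
  have := (tendsto_pow_const_mul_const_pow_of_lt_one 1 h0 h1).const_mul C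
  rw [mul_zero] at this
  refine this.congr fun t => ?_
  rw [← Real.exp_nat_mul]
  rw [pow_one]
  ring_nf

lemma aux_S_tendsto (C c : ℝ) (hC : 0 < C) (hc : 0 < c) (Rθ : ℕ → ℕ → ℝ) (Rlim : ℕ → ℝ)
    (hRθbound : ∀ t s : ℕ, 1 ≤ s → |Rθ (t + s) t| ≤ C * Real.exp (-c * s))
    (hRθlim : ∀ s : ℕ, 1 ≤ s → Tendsto (fun t => Rθ (t + s) t) atTop (nhds (Rlim s)))
    (hRlimb : ∀ s : ℕ, 1 ≤ s → |Rlim s| ≤ C * Real.exp (-c * s)) :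
    Tendsto (fun t => ∑ k ∈ Finset.range t, |Rθ t (t - 1 - k) - Rlim (k + 1)|)
      atTop (nhds 0) := by
  set F : ℕ → ℕ → ℝ := fun t k => if k < t then |Rθ t (t - 1 - k) - Rlim (k + 1)| else 0
    with hF
  have hb : ∀ k : ℕ, |Rlim (k+1)| ≤ C * Real.exp (-c * (k+1)) := by
    intro k
    have := hRlimb (k+1) (by omega)
    push_cast at this ⊢; linarith
  have hbθ : ∀ t k : ℕ, k < t → |Rθ t (t - 1 - k)| ≤ C * Real.exp (-c * (k+1)) := by
    intro t k hk
    have h1 : (t - 1 - k) + (k + 1) = t := by omega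
    have := hRθbound (t - 1 - k) (k+1) (by omega)
    rw [h1] at this
    push_cast at this ⊢; linarith
  have key := tendsto_tsum_of_dominated_convergence
      (𝓕 := atTop) (f := F) (g := fun _ => (0:ℝ)) (bound := fun k => 2 * C * Real.exp (-c * (k+1)))
      (by simpa using aux_exp_geom (2*C) c hc)
      (fun k => ?_) ?_
  · have h0 : (∑' _ : ℕ, (0:ℝ)) = 0 := tsum_zero
    rw [h0] at key
    refine key.congr fun t => ?_
    rw [tsum_eq_sum (s := Finset.range t)
        (fun k hk => by simp only [hF]; rw [if_neg (by simpa using hk)])]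
    exact Finset.sum_congr rfl fun k hk => by
      simp only [hF]; rw [if_pos (Finset.mem_range.mp hk)]
  · -- pointwise convergence
    have h1 : Tendsto (fun t : ℕ => Rθ ((t - (k+1)) + (k+1)) (t - (k+1))) atTop
        (nhds (Rlim (k+1))) := (hRθlim (k+1) (by omega)).comp (tendsto_sub_atTop_nat (k+1))
    have h2 : Tendsto (fun t : ℕ => |Rθ ((t - (k+1)) + (k+1)) (t - (k+1)) - Rlim (k+1)|)
        atTop (nhds 0) := by
      simpa using (h1.sub (tendsto_const_nhds (x := Rlim (k+1)))).abs
    refine h2.congr' ?_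
    filter_upwards [eventually_ge_atTop (k+1)] with t ht
    have h3 : (t - (k+1)) + (k+1) = t := by omega
    have h4 : t - (k+1) = t - 1 - k := by omega
    simp only [hF, if_pos (show k < t by omega)]
    rw [h3, h4]
  · -- uniform bound
    refine Eventually.of_forall fun t k => ?_
    rw [Real.norm_eq_abs]
    by_cases hk : k < t
    · simp only [hF, if_pos hk, abs_abs]
      have := abs_sub (Rθ t (t - 1 - k)) (Rlim (k+1))
      have h5 := hbθ t k hk
      have h6 := hb k
      calc |Rθ t (t - 1 - k) - Rlim (k+1)| ≤ |Rθ t (t - 1 - k)| + |Rlim (k+1)| :=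
            abs_sub _ _
        _ ≤ 2 * C * Real.exp (-c * (k+1)) := by linarith
    · simp only [hF, if_neg hk, abs_zero]
      positivity

lemma aux_mul_const {Ω : Type*} [MeasurableSpace Ω] (P : Measure Ω) (g : Ω → ℝ) (r : ℝ) :
    eLpNorm (fun ω => g ω * r) 2 P = ENNReal.ofReal |r| * eLpNorm g 2 P := by
  have h : (fun ω => g ω * r) = r • g := by funext ω; simp [mul_comm]
  rw [h, eLpNorm_const_smul]
  congr 1
  rw [← ofReal_norm, Real.norm_eq_abs]

lemma aux_add6 {Ω : Type*} [MeasurableSpace Ω] {P : Measure Ω}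
    {g1 g2 g3 g4 g5 g6 : Ω → ℝ}
    (h1 : AEStronglyMeasurable g1 P) (h2 : AEStronglyMeasurable g2 P)
    (h3 : AEStronglyMeasurable g3 P) (h4 : AEStronglyMeasurable g4 P)
    (h5 : AEStronglyMeasurable g5 P) (h6 : AEStronglyMeasurable g6 P) :
    eLpNorm (fun ω => g1 ω + g2 ω + g3 ω + g4 ω + g5 ω + g6 ω) 2 P ≤
      eLpNorm g1 2 P + eLpNorm g2 2 P + eLpNorm g3 2 P + eLpNorm g4 2 P
        + eLpNorm g5 2 P + eLpNorm g6 2 P := by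
  have e : (fun ω => g1 ω + g2 ω + g3 ω + g4 ω + g5 ω + g6 ω)
      = ((((g1 + g2) + g3) + g4) + g5) + g6 := rfl
  rw [e]
  calc eLpNorm (((((g1 + g2) + g3) + g4) + g5) + g6) 2 P
      ≤ eLpNorm ((((g1 + g2) + g3) + g4) + g5) 2 P + eLpNorm g6 2 P :=
        eLpNorm_add_le (((((h1.add h2).add h3).add h4).add h5)) h6 one_le_two
    _ ≤ (eLpNorm (((g1 + g2) + g3) + g4) 2 P + eLpNorm g5 2 P) + eLpNorm g6 2 P :=
        add_le_add_left (eLpNorm_add_le ((((h1.add h2).add h3).add h4)) h5 one_le_two) _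
    _ ≤ ((eLpNorm ((g1 + g2) + g3) 2 P + eLpNorm g4 2 P) + eLpNorm g5 2 P)
        + eLpNorm g6 2 P := by
        gcongr
        exact eLpNorm_add_le (((h1.add h2).add h3)) h4 one_le_two
    _ ≤ (((eLpNorm (g1 + g2) 2 P + eLpNorm g3 2 P) + eLpNorm g4 2 P) + eLpNorm g5 2 P)
        + eLpNorm g6 2 P := by
        gcongr
        exact eLpNorm_add_le ((h1.add h2)) h3 one_le_two
    _ ≤ ((((eLpNorm g1 2 P + eLpNorm g2 2 P) + eLpNorm g3 2 P) + eLpNorm g4 2 P)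
        + eLpNorm g5 2 P) + eLpNorm g6 2 P := by
        gcongr
        exact eLpNorm_add_le h1 h2 one_le_two

set_option maxHeartbeats 1600000 in
theorem stmt17 {Ω : Type*} [MeasurableSpace Ω] (P : Measure Ω) [IsProbabilityMeasure P]
    (wstar z y w0 : Ω → ℝ) (η w : ℕ → Ω → ℝ)
    (hwstar : MemLp wstar 2 P) (hz : MemLp z 2 P) (hy : MemLp y 2 P)
    (hw0 : MemLp w0 2 P) (hη : ∀ t, MemLp (η t) 2 P) (hw : ∀ t, MemLp (w t) 2 P)
    (ℓ : ℝ → ℝ → ℝ → ℝ) (K : ℝ≥0)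
    (hℓ : LipschitzWith K (fun p : ℝ × ℝ × ℝ => ℓ p.1 p.2.1 p.2.2))
    (𝒯 : ℝ → ℝ) (h𝒯m : Measurable 𝒯) (B : ℝ) (h𝒯b : ∀ x, |𝒯 x| ≤ B)
    (Rθ : ℕ → ℕ → ℝ) (Rd : ℕ → ℝ)
    (heq : ∀ t : ℕ, ∀ᵐ ω ∂P,
      η t ω = -(∑ s ∈ Finset.range t, ℓ (η s ω) (wstar ω) (z ω) * Rθ t s)
        + 𝒯 (y ω) * w0 ω * Rd t + w t ω)
    (ηinf winf : Ω → ℝ) (hηinf : MemLp ηinf 2 P) (hwinf : MemLp winf 2 P)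
    (C c : ℝ) (hC : 0 < C) (hc : 0 < c)
    (hηconv : ∀ t : ℕ, eLpNorm (fun ω => η t ω - ηinf ω) 2 P
      ≤ ENNReal.ofReal (C * Real.exp (-c * t)))
    (hwconv : ∀ t : ℕ, eLpNorm (fun ω => w t ω - winf ω) 2 P
      ≤ ENNReal.ofReal (C * Real.exp (-c * t)))
    (hRd : Tendsto Rd atTop (nhds 0))
    (hRθbound : ∀ t s : ℕ, 1 ≤ s → |Rθ (t + s) t| ≤ C * Real.exp (-c * s))
    (Rlim : ℕ → ℝ)
    (hRθlim : ∀ s : ℕ, 1 ≤ s →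
      Tendsto (fun t => Rθ (t + s) t) atTop (nhds (Rlim s))) :
    Summable (fun s : ℕ => |Rlim (s + 1)|) ∧
      ∀ᵐ ω ∂P, ηinf ω
        = -(∑' s : ℕ, Rlim (s + 1)) * ℓ (ηinf ω) (wstar ω) (z ω) + winf ω := by
  classical
  have hRlimb : ∀ s : ℕ, 1 ≤ s → |Rlim s| ≤ C * Real.exp (-c * s) := fun s hs =>
    le_of_tendsto ((hRθlim s hs).abs) (Eventually.of_forall fun t => hRθbound t s hs)
  have hgeom := aux_exp_geom C c hc
  have hS : Summable fun s : ℕ => |Rlim (s + 1)| := by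
    refine Summable.of_nonneg_of_le (fun s => abs_nonneg _) (fun s => ?_) hgeom
    have := hRlimb (s + 1) (by omega)
    push_cast at this ⊢; linarith
  refine ⟨hS, ?_⟩
  have hRsum : Summable fun s : ℕ => Rlim (s + 1) := hS.of_abs
  set f : Ω → ℝ := fun ω => ℓ (ηinf ω) (wstar ω) (z ω) with hfdef
  set T : ℝ := ∑' s : ℕ, Rlim (s + 1) with hTdef
  -- measurability
  have hfm : AEStronglyMeasurable f P := hℓ.continuous.comp_aestronglyMeasurable
    (hηinf.aestronglyMeasurable.prodMk
      (hwstar.aestronglyMeasurable.prodMk hz.aestronglyMeasurable))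
  have hℓsm : ∀ s, AEStronglyMeasurable (fun ω => ℓ (η s ω) (wstar ω) (z ω)) P := fun s =>
    hℓ.continuous.comp_aestronglyMeasurable
      ((hη s).aestronglyMeasurable.prodMk
        (hwstar.aestronglyMeasurable.prodMk hz.aestronglyMeasurable))
  -- pointwise Lipschitz bounds
  have hlip : ∀ x x' b d : ℝ, |ℓ x b d - ℓ x' b d| ≤ (K : ℝ) * |x - x'| := by
    intro x x' b d
    have h1 := hℓ.dist_le_mul (x, b, d) (x', b, d)
    simpa [Prod.dist_eq, Real.dist_eq, abs_nonneg] using h1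
  have hlin : ∀ x b d : ℝ, |ℓ x b d| ≤ |ℓ 0 0 0| + (K : ℝ) * (|x| + |b| + |d|) := by
    intro x b d
    have h1 := hℓ.dist_le_mul (x, b, d) (0, 0, 0)
    simp only [Prod.dist_eq, Real.dist_eq, sub_zero] at h1
    have h2 : |ℓ x b d| ≤ |ℓ x b d - ℓ 0 0 0| + |ℓ 0 0 0| := by
      have := abs_sub (ℓ x b d - ℓ 0 0 0) (-(ℓ 0 0 0))
      calc |ℓ x b d| = |(ℓ x b d - ℓ 0 0 0) + ℓ 0 0 0| := by ring_nf
        _ ≤ |ℓ x b d - ℓ 0 0 0| + |ℓ 0 0 0| := abs_add_le _ _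
    have h3 : max |x| (max |b| |d|) ≤ |x| + |b| + |d| := by
      have hx := abs_nonneg x; have hb := abs_nonneg b; have hd := abs_nonneg d
      exact max_le (by linarith) (max_le (by linarith) (by linarith))
    have h4 : (K : ℝ) * max |x| (max |b| |d|) ≤ (K : ℝ) * (|x| + |b| + |d|) :=
      mul_le_mul_of_nonneg_left h3 K.coe_nonneg
    linarith
  -- MemLp facts
  have hf2 : MemLp f 2 P := by
    have hg : MemLp (fun ω => |ℓ 0 0 0| + (K : ℝ) * (|ηinf ω| + |wstar ω| + |z ω|)) 2 P := by
      have h1 : MemLp (fun ω => |ηinf ω| + |wstar ω| + |z ω|) 2 P :=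
        (hηinf.norm.add hwstar.norm).add hz.norm
      exact (memLp_const (μ := P) (p := 2) |ℓ 0 0 0|).add (h1.const_mul _)
    refine hg.of_le hfm (Eventually.of_forall fun ω => ?_)
    rw [Real.norm_eq_abs, Real.norm_eq_abs]
    have h0 : (0:ℝ) ≤ |ℓ 0 0 0| + (K : ℝ) * (|ηinf ω| + |wstar ω| + |z ω|) := by positivity
    rw [abs_of_nonneg h0]
    exact hlin _ _ _
  have hL : eLpNorm f 2 P ≠ ∞ := hf2.2.ne
  have hum : AEStronglyMeasurable (fun ω => 𝒯 (y ω) * w0 ω) P :=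
    ((h𝒯m.comp_aemeasurable hy.aestronglyMeasurable.aemeasurable).mul
      hw0.aestronglyMeasurable.aemeasurable).aestronglyMeasurable
  have hu2 : MemLp (fun ω => 𝒯 (y ω) * w0 ω) 2 P := by
    refine (hw0.norm.const_mul B).of_le hum (Eventually.of_forall fun ω => ?_)
    rw [Real.norm_eq_abs, Real.norm_eq_abs, abs_mul]
    have h1 : |𝒯 (y ω)| * |w0 ω| ≤ B * |w0 ω| :=
      mul_le_mul_of_nonneg_right (h𝒯b _) (abs_nonneg _)
    calc |𝒯 (y ω)| * |w0 ω| ≤ B * |w0 ω| := h1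
      _ = B * ‖w0 ω‖ := by rw [Real.norm_eq_abs]
      _ ≤ |B * ‖w0 ω‖| := le_abs_self _
  have hM : eLpNorm (fun ω => 𝒯 (y ω) * w0 ω) 2 P ≠ ∞ := hu2.2.ne
  -- L² Lipschitz difference bound
  have hdiff : ∀ s : ℕ, eLpNorm (fun ω => f ω - ℓ (η s ω) (wstar ω) (z ω)) 2 P
      ≤ ENNReal.ofReal ((K : ℝ) * (C * Real.exp (-c * s))) := by
    intro s
    calc eLpNorm (fun ω => f ω - ℓ (η s ω) (wstar ω) (z ω)) 2 P
        ≤ eLpNorm ((K : ℝ) • fun ω => ‖η s ω - ηinf ω‖) 2 P := by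
          refine eLpNorm_mono_real fun ω => ?_
          simp only [Pi.smul_apply, smul_eq_mul, Real.norm_eq_abs]
          calc ‖f ω - ℓ (η s ω) (wstar ω) (z ω)‖
              ≤ (K : ℝ) * |ηinf ω - η s ω| := by
                rw [Real.norm_eq_abs]; exact hlip _ _ _ _
            _ = (K : ℝ) * |η s ω - ηinf ω| := by rw [abs_sub_comm]
      _ = ‖(K : ℝ)‖ₑ * eLpNorm (fun ω => ‖η s ω - ηinf ω‖) 2 P := by
          rw [eLpNorm_const_smul]
      _ = ENNReal.ofReal (K : ℝ) * eLpNorm (fun ω => η s ω - ηinf ω) 2 P := by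
          rw [eLpNorm_norm, ← ofReal_norm,
            Real.norm_of_nonneg K.coe_nonneg]
      _ ≤ ENNReal.ofReal (K : ℝ) * ENNReal.ofReal (C * Real.exp (-c * s)) :=
          mul_le_mul_right (hηconv s) _
      _ = ENNReal.ofReal ((K : ℝ) * (C * Real.exp (-c * s))) := by
          rw [← ENNReal.ofReal_mul K.coe_nonneg]
  -- a.e. decomposition
  have hae : ∀ t : ℕ, ∀ᵐ ω ∂P,
      ηinf ω - (-T * f ω + winf ω)
        = (ηinf ω - η t ω)
          + (∑ k ∈ Finset.range t,
              (f ω - ℓ (η (t - 1 - k) ω) (wstar ω) (z ω)) * Rθ t (t - 1 - k))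
          + (∑ k ∈ Finset.range t, f ω * (Rlim (k + 1) - Rθ t (t - 1 - k)))
          + f ω * (∑' k : ℕ, Rlim (k + t + 1))
          + 𝒯 (y ω) * w0 ω * Rd t
          + (w t ω - winf ω) := by
    intro t
    filter_upwards [heq t] with ω hω
    have hTsplit : T = (∑ k ∈ Finset.range t, Rlim (k + 1)) + ∑' k : ℕ, Rlim (k + t + 1) := by
      rw [hTdef, ← Summable.sum_add_tsum_nat_add t hRsum]
    have hA : (∑ s ∈ Finset.range t, ℓ (η s ω) (wstar ω) (z ω) * Rθ t s)
        = ∑ k ∈ Finset.range t, ℓ (η (t - 1 - k) ω) (wstar ω) (z ω) * Rθ t (t - 1 - k) :=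
      (Finset.sum_range_reflect (fun s => ℓ (η s ω) (wstar ω) (z ω) * Rθ t s) t).symm
    have hsum1 : (∑ k ∈ Finset.range t,
          (f ω - ℓ (η (t - 1 - k) ω) (wstar ω) (z ω)) * Rθ t (t - 1 - k))
        + (∑ k ∈ Finset.range t, f ω * (Rlim (k + 1) - Rθ t (t - 1 - k)))
        = (∑ k ∈ Finset.range t, Rlim (k + 1)) * f ω
          - ∑ k ∈ Finset.range t, ℓ (η (t - 1 - k) ω) (wstar ω) (z ω) * Rθ t (t - 1 - k) := by
      rw [Finset.sum_mul, ← Finset.sum_add_distrib, ← Finset.sum_sub_distrib]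
      exact Finset.sum_congr rfl fun k _ => by ring
    rw [hω, hA, hTsplit]
    linarith [hsum1]
  -- the quantitative bound
  have key : ∀ t : ℕ,
      eLpNorm (fun ω => ηinf ω - (-T * f ω + winf ω)) 2 P ≤
        ENNReal.ofReal (C * Real.exp (-c * t))
        + ENNReal.ofReal ((t : ℝ) * ((K : ℝ) * C * C * Real.exp (-c * t)))
        + ENNReal.ofReal (∑ k ∈ Finset.range t, |Rθ t (t - 1 - k) - Rlim (k + 1)|)
            * eLpNorm f 2 P
        + ENNReal.ofReal (|∑' k : ℕ, Rlim (k + t + 1)|) * eLpNorm f 2 P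
        + ENNReal.ofReal (|Rd t|) * eLpNorm (fun ω => 𝒯 (y ω) * w0 ω) 2 P
        + ENNReal.ofReal (C * Real.exp (-c * t)) := by
    intro t
    rw [eLpNorm_congr_ae (hae t)]
    have m1 : AEStronglyMeasurable (fun ω => ηinf ω - η t ω) P :=
      hηinf.aestronglyMeasurable.sub (hη t).aestronglyMeasurable
    have m2 : AEStronglyMeasurable (fun ω => ∑ k ∈ Finset.range t,
        (f ω - ℓ (η (t - 1 - k) ω) (wstar ω) (z ω)) * Rθ t (t - 1 - k)) P :=
      Finset.aestronglyMeasurable_fun_sum _ fun k _ => (hfm.sub (hℓsm _)).mul_const _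
    have m3 : AEStronglyMeasurable (fun ω => ∑ k ∈ Finset.range t,
        f ω * (Rlim (k + 1) - Rθ t (t - 1 - k))) P :=
      Finset.aestronglyMeasurable_fun_sum _ fun k _ => hfm.mul_const _
    have m4 : AEStronglyMeasurable (fun ω => f ω * (∑' k : ℕ, Rlim (k + t + 1))) P :=
      hfm.mul_const _
    have m5 : AEStronglyMeasurable (fun ω => 𝒯 (y ω) * w0 ω * Rd t) P := hum.mul_const _
    have m6 : AEStronglyMeasurable (fun ω => w t ω - winf ω) P :=
      (hw t).aestronglyMeasurable.sub hwinf.aestronglyMeasurable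
    refine le_trans (aux_add6 m1 m2 m3 m4 m5 m6) ?_
    gcongr ?_ + ?_ + ?_ + ?_ + ?_ + ?_
    · -- first term
      have he : (fun ω => ηinf ω - η t ω) = -(fun ω => η t ω - ηinf ω) := by
        funext ω; simp
      rw [he, eLpNorm_neg]
      exact hηconv t
    · -- second term
      have hrw2 : (fun ω => ∑ k ∈ Finset.range t,
          (f ω - ℓ (η (t - 1 - k) ω) (wstar ω) (z ω)) * Rθ t (t - 1 - k))
          = ∑ k ∈ Finset.range t, (fun ω =>
            (f ω - ℓ (η (t - 1 - k) ω) (wstar ω) (z ω)) * Rθ t (t - 1 - k)) := by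
        funext ω; simp
      rw [hrw2]
      refine le_trans (eLpNorm_sum_le (fun k _ => (hfm.sub (hℓsm _)).mul_const _)
        one_le_two) ?_
      have hterm : ∀ k ∈ Finset.range t,
          eLpNorm (fun ω =>
            (f ω - ℓ (η (t - 1 - k) ω) (wstar ω) (z ω)) * Rθ t (t - 1 - k)) 2 P
          ≤ ENNReal.ofReal ((K : ℝ) * C * C * Real.exp (-c * t)) := by
        intro k hk
        have hk' : k < t := Finset.mem_range.mp hk
        rw [aux_mul_const]
        have h1 : |Rθ t (t - 1 - k)| ≤ C * Real.exp (-c * ((k : ℝ) + 1)) := by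
          have htk : (t - 1 - k) + (k + 1) = t := by omega
          have := hRθbound (t - 1 - k) (k + 1) (by omega)
          rw [htk] at this
          push_cast at this ⊢; linarith
        calc ENNReal.ofReal |Rθ t (t - 1 - k)|
              * eLpNorm (fun ω => f ω - ℓ (η (t - 1 - k) ω) (wstar ω) (z ω)) 2 P
            ≤ ENNReal.ofReal (C * Real.exp (-c * ((k : ℝ) + 1)))
              * ENNReal.ofReal ((K : ℝ) * (C * Real.exp (-c * ((t - 1 - k : ℕ) : ℝ)))) :=
              mul_le_mul' (ENNReal.ofReal_le_ofReal h1) (hdiff (t - 1 - k))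
          _ = ENNReal.ofReal ((K : ℝ) * C * C * Real.exp (-c * t)) := by
              rw [← ENNReal.ofReal_mul (by positivity)]
              congr 1
              have hcast : ((t - 1 - k : ℕ) : ℝ) + ((k : ℝ) + 1) = (t : ℝ) := by
                have htk : (t - 1 - k) + (k + 1) = t := by omega
                exact_mod_cast congrArg (Nat.cast (R := ℝ)) htk
              have hexp : Real.exp (-c * ((k : ℝ) + 1))
                  * Real.exp (-c * ((t - 1 - k : ℕ) : ℝ)) = Real.exp (-c * t) := by
                rw [← Real.exp_add]
                congr 1
                rw [← hcast]; ring
              calc C * Real.exp (-c * ((k : ℝ) + 1))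
                    * ((K : ℝ) * (C * Real.exp (-c * ((t - 1 - k : ℕ) : ℝ))))
                  = (K : ℝ) * C * C * (Real.exp (-c * ((k : ℝ) + 1))
                      * Real.exp (-c * ((t - 1 - k : ℕ) : ℝ))) := by ring
                _ = (K : ℝ) * C * C * Real.exp (-c * t) := by rw [hexp]
      refine le_trans (Finset.sum_le_sum hterm) ?_
      rw [Finset.sum_const, Finset.card_range, nsmul_eq_mul]
      rw [← ENNReal.ofReal_natCast t, ← ENNReal.ofReal_mul (by positivity)]
    · -- third term
      have hrw3 : (fun ω => ∑ k ∈ Finset.range t, f ω * (Rlim (k + 1) - Rθ t (t - 1 - k)))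
          = ∑ k ∈ Finset.range t, (fun ω => f ω * (Rlim (k + 1) - Rθ t (t - 1 - k))) := by
        funext ω; simp
      rw [hrw3]
      refine le_trans (eLpNorm_sum_le (fun k _ => hfm.mul_const _) one_le_two) ?_
      have hterm : ∀ k ∈ Finset.range t,
          eLpNorm (fun ω => f ω * (Rlim (k + 1) - Rθ t (t - 1 - k))) 2 P
          = ENNReal.ofReal (|Rθ t (t - 1 - k) - Rlim (k + 1)|) * eLpNorm f 2 P := by
        intro k _
        rw [aux_mul_const, abs_sub_comm]
      rw [Finset.sum_congr rfl hterm, ← Finset.sum_mul,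
        ENNReal.ofReal_sum_of_nonneg (fun k _ => abs_nonneg _)]
    · -- fourth term
      rw [aux_mul_const]
    · -- fifth term
      have he : (fun ω => 𝒯 (y ω) * w0 ω * Rd t)
          = fun ω => (fun ω => 𝒯 (y ω) * w0 ω) ω * Rd t := rfl
      rw [he, aux_mul_const]
    · exact hwconv t
  -- the bound tends to zero
  have hb : Tendsto (fun t : ℕ =>
      ENNReal.ofReal (C * Real.exp (-c * t))
      + ENNReal.ofReal ((t : ℝ) * ((K : ℝ) * C * C * Real.exp (-c * t)))
      + ENNReal.ofReal (∑ k ∈ Finset.range t, |Rθ t (t - 1 - k) - Rlim (k + 1)|)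
          * eLpNorm f 2 P
      + ENNReal.ofReal (|∑' k : ℕ, Rlim (k + t + 1)|) * eLpNorm f 2 P
      + ENNReal.ofReal (|Rd t|) * eLpNorm (fun ω => 𝒯 (y ω) * w0 ω) 2 P
      + ENNReal.ofReal (C * Real.exp (-c * t))) atTop (nhds 0) := by
    have t1 : Tendsto (fun t : ℕ => ENNReal.ofReal (C * Real.exp (-c * t))) atTop
        (nhds 0) := by
      simpa using ENNReal.tendsto_ofReal (aux_exp_tendsto C c hc)
    have t2 : Tendsto (fun t : ℕ =>
        ENNReal.ofReal ((t : ℝ) * ((K : ℝ) * C * C * Real.exp (-c * t)))) atTop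
        (nhds 0) := by
      simpa using ENNReal.tendsto_ofReal (aux_texp_tendsto ((K : ℝ) * C * C) c hc)
    have t3 : Tendsto (fun t : ℕ =>
        ENNReal.ofReal (∑ k ∈ Finset.range t, |Rθ t (t - 1 - k) - Rlim (k + 1)|)
          * eLpNorm f 2 P) atTop (nhds 0) := by
      have h0 := aux_S_tendsto C c hC hc Rθ Rlim hRθbound hRθlim hRlimb
      have h1 : Tendsto (fun t : ℕ =>
          ENNReal.ofReal (∑ k ∈ Finset.range t, |Rθ t (t - 1 - k) - Rlim (k + 1)|))
          atTop (nhds 0) := by simpa using ENNReal.tendsto_ofReal h0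
      simpa using ENNReal.Tendsto.mul_const h1 (Or.inr hL)
    have t4 : Tendsto (fun t : ℕ =>
        ENNReal.ofReal (|∑' k : ℕ, Rlim (k + t + 1)|) * eLpNorm f 2 P) atTop (nhds 0) := by
      have h0 : Tendsto (fun t : ℕ => ∑' k : ℕ, Rlim (k + t + 1)) atTop (nhds 0) :=
        tendsto_sum_nat_add (fun k => Rlim (k + 1))
      have h1 : Tendsto (fun t : ℕ => ENNReal.ofReal (|∑' k : ℕ, Rlim (k + t + 1)|))
          atTop (nhds 0) := by simpa using ENNReal.tendsto_ofReal h0.abs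
      simpa using ENNReal.Tendsto.mul_const h1 (Or.inr hL)
    have t5 : Tendsto (fun t : ℕ =>
        ENNReal.ofReal (|Rd t|) * eLpNorm (fun ω => 𝒯 (y ω) * w0 ω) 2 P) atTop
        (nhds 0) := by
      have h1 : Tendsto (fun t : ℕ => ENNReal.ofReal (|Rd t|)) atTop (nhds 0) := by
        simpa using ENNReal.tendsto_ofReal hRd.abs
      simpa using ENNReal.Tendsto.mul_const h1 (Or.inr hM)
    simpa using ((((t1.add t2).add t3).add t4).add t5).add t1
  have hD0 : eLpNorm (fun ω => ηinf ω - (-T * f ω + winf ω)) 2 P = 0 :=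
    le_antisymm (ge_of_tendsto' hb key) zero_le
  have hDm : AEStronglyMeasurable (fun ω => ηinf ω - (-T * f ω + winf ω)) P :=
    hηinf.aestronglyMeasurable.sub ((hfm.const_mul _).add hwinf.aestronglyMeasurable)
  have hzero := (eLpNorm_eq_zero_iff hDm (by norm_num)).mp hD0
  filter_upwards [hzero] with ω hω
  have h2 : ηinf ω - (-T * ℓ (ηinf ω) (wstar ω) (z ω) + winf ω) = 0 := hω
  linarith
end

section
/- Let (Ω, F, P) be a probability space and let θ*, u^∞, (θ^t)_{t≥0}, (u^t)_{t≥0} be real random variables in L²(P). Let γ > 0 and λ, δ ∈ ℝ, and let Γ_t, R_η(t,s) (t > s ≥ 0), R_♦(t), R_*(t), R_♦♦(t) be real numbers. Suppose: (i) for every t ≥ 0, θ^{t+1} = θ^t + γ( −λθ^t − δΓ_t θ^t − Σ_{s=0}^{t−1} R_η(t,s) θ^s − R_♦(t) θ⁰ − (R_*(t) + R_♦♦(t)) θ* + u^t ) almost surely; (ii) there exists θ^∞ ∈ L²(P) and constants C, c > 0 with ‖θ^t − θ^∞‖_{L²} ≤ C e^{−ct} and ‖u^t − u^∞‖_{L²}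 ≤ C e^{−ct} for all t; (iii) Γ_t → Γ^∞, R_♦(t) → 0, R_♦♦(t) → 0, and R_*(t) → R_*^∞ as t → ∞; (iv) |R_η(t+s, t)| ≤ C e^{−cs} for all t ≥ 0, s ≥ 1, and for each s ≥ 1 the limit R(s) := lim_{t→∞} R_η(t+s, t) exists. Then the series R_η^∞ := Σ_{s=1}^∞ R(s) converges absolutely and 0 = −(λ + δΓ^∞ + R_η^∞) θ^∞ − R_*^∞ θ* + u^∞ almost surely. -/
open MeasureTheory Filter
open scoped ENNReal

theorem stmt18 {Ω : Type*} [MeasurableSpace Ω] (P : Measure Ω) [IsProbabilityMeasure P]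
    (θstar uinf : Ω → ℝ) (θ u : ℕ → Ω → ℝ)
    (hθstar : MemLp θstar 2 P) (huinf : MemLp uinf 2 P)
    (hθl2 : ∀ t, MemLp (θ t) 2 P) (hul2 : ∀ t, MemLp (u t) 2 P)
    (γ lam δ : ℝ) (hγ : 0 < γ)
    (Γ : ℕ → ℝ) (Rη : ℕ → ℕ → ℝ) (Rd Rs Rdd : ℕ → ℝ)
    (heq : ∀ t : ℕ, ∀ᵐ ω ∂P,
      θ (t + 1) ω = θ t ω + γ * (-(lam * θ t ω) - δ * Γ t * θ t ω
        - (∑ s ∈ Finset.range t, Rη t s * θ s ω)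
        - Rd t * θ 0 ω - (Rs t + Rdd t) * θstar ω + u t ω))
    (θinf : Ω → ℝ) (hθinf : MemLp θinf 2 P)
    (C c : ℝ) (hC : 0 < C) (hc : 0 < c)
    (hθconv : ∀ t : ℕ, eLpNorm (fun ω => θ t ω - θinf ω) 2 P
      ≤ ENNReal.ofReal (C * Real.exp (-c * t)))
    (huconv : ∀ t : ℕ, eLpNorm (fun ω => u t ω - uinf ω) 2 P
      ≤ ENNReal.ofReal (C * Real.exp (-c * t)))
    (Γinf Rsinf : ℝ)
    (hΓ : Tendsto Γ atTop (nhds Γinf))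
    (hRd : Tendsto Rd atTop (nhds 0))
    (hRdd : Tendsto Rdd atTop (nhds 0))
    (hRs : Tendsto Rs atTop (nhds Rsinf))
    (hRηbound : ∀ t s : ℕ, 1 ≤ s → |Rη (t + s) t| ≤ C * Real.exp (-c * s))
    (Rlim : ℕ → ℝ)
    (hRηlim : ∀ s : ℕ, 1 ≤ s →
      Tendsto (fun t => Rη (t + s) t) atTop (nhds (Rlim s))) :
    Summable (fun s : ℕ => |Rlim (s + 1)|) ∧
      ∀ᵐ ω ∂P,
        0 = -(lam + δ * Γinf + ∑' s : ℕ, Rlim (s + 1)) * θinf ω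
          - Rsinf * θstar ω + uinf ω := by
  classical
  -- summable bound
  have hbd_sum : Summable (fun k : ℕ => C * Real.exp (-c * (k + 1))) := by
    have h1 : Real.exp (-c) < 1 := by
      rw [Real.exp_lt_one_iff]; linarith
    have hgeo : Summable (fun k : ℕ => (C * Real.exp (-c)) * (Real.exp (-c)) ^ k) :=
      (summable_geometric_of_lt_one (Real.exp_nonneg _) h1).mul_left _
    refine hgeo.congr fun k => ?_
    rw [show -c * ((k : ℝ) + 1) = (k : ℝ) * (-c) + (-c) by ring, Real.exp_add,
      Real.exp_nat_mul]
    ring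
  have hRlim_bd : ∀ k : ℕ, |Rlim (k + 1)| ≤ C * Real.exp (-c * (k + 1)) := by
    intro k
    have h := (hRηlim (k + 1) (Nat.le_add_left 1 k)).abs
    refine le_of_tendsto h (Eventually.of_forall fun t => ?_)
    have := hRηbound t (k + 1) (Nat.le_add_left 1 k)
    simpa using this
  have hsummable : Summable (fun s : ℕ => |Rlim (s + 1)|) :=
    hbd_sum.of_nonneg_of_le (fun _ => abs_nonneg _) hRlim_bd
  refine ⟨hsummable, ?_⟩
  -- exponential decay to zero
  have hexp0 : ∀ K : ℝ, Tendsto (fun t : ℕ => K * Real.exp (-c * t)) atTop (nhds 0) := by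
    intro K
    have h1 : Real.exp (-c) < 1 := by rw [Real.exp_lt_one_iff]; linarith
    have := (tendsto_pow_atTop_nhds_zero_of_lt_one (Real.exp_nonneg (-c)) h1).const_mul K
    rw [mul_zero] at this
    refine this.congr fun t => ?_
    rw [← Real.exp_nat_mul, mul_comm ((t:ℝ)) (-c)]
  -- convergence of X t to Xinf in Lp
  have hXnorm : ∀ t : ℕ, ‖(hθl2 t).toLp (θ t) - hθinf.toLp θinf‖ ≤ C * Real.exp (-c * t) := by
    intro t
    rw [show (hθl2 t).toLp (θ t) - hθinf.toLp θinf = ((hθl2 t).sub hθinf).toLp (θ t - θinf)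
      from rfl, Lp.norm_toLp]
    refine ENNReal.toReal_le_of_le_ofReal (by positivity) ?_
    exact hθconv t
  have hUnorm : ∀ t : ℕ, ‖(hul2 t).toLp (u t) - huinf.toLp uinf‖ ≤ C * Real.exp (-c * t) := by
    intro t
    rw [show (hul2 t).toLp (u t) - huinf.toLp uinf = ((hul2 t).sub huinf).toLp (u t - uinf)
      from rfl, Lp.norm_toLp]
    refine ENNReal.toReal_le_of_le_ofReal (by positivity) ?_
    exact huconv t
  have hXtend : Tendsto (fun t : ℕ => (hθl2 t).toLp (θ t)) atTop (nhds (hθinf.toLp θinf)) := by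
    rw [tendsto_iff_norm_sub_tendsto_zero]
    exact squeeze_zero (fun t => norm_nonneg _) hXnorm (hexp0 C)
  have hUtend : Tendsto (fun t : ℕ => (hul2 t).toLp (u t)) atTop (nhds (huinf.toLp uinf)) := by
    rw [tendsto_iff_norm_sub_tendsto_zero]
    exact squeeze_zero (fun t => norm_nonneg _) hUnorm (hexp0 C)
  -- the sum function
  have hgmem : ∀ t : ℕ, MemLp (fun ω => ∑ s ∈ Finset.range t, Rη t s * θ s ω) 2 P := by
    intro t
    exact memLp_finset_sum _ fun s _ => (hθl2 s).const_mul (Rη t s)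
    -- Lp coercion of finite sums
  have hcoesum : ∀ (n : ℕ) (F : ℕ → Lp ℝ 2 P),
      (⇑(∑ s ∈ Finset.range n, F s) : Ω → ℝ) =ᵐ[P] fun ω => ∑ s ∈ Finset.range n, F s ω := by
    intro n F
    induction (Finset.range n) using Finset.cons_induction with
    | empty => simp; exact Lp.coeFn_zero ℝ 2 P
    | cons i s hi ih =>
      rw [Finset.sum_cons]
      filter_upwards [Lp.coeFn_add (F i) (∑ j ∈ s, F j), ih] with ω h1 h2
      rw [Finset.sum_cons, h1, Pi.add_apply, h2]
  have hS_eq : ∀ t : ℕ, (hgmem t).toLp _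
      = ∑ s ∈ Finset.range t, Rη t s • (hθl2 s).toLp (θ s) := by
    intro t
    refine Lp.ext ?_
    have h1 : ∀ᵐ ω ∂P, ∀ s ∈ Finset.range t,
        (⇑(Rη t s • (hθl2 s).toLp (θ s)) : Ω → ℝ) ω = Rη t s * θ s ω := by
      rw [Filter.eventually_all_finset]
      intro s _
      filter_upwards [Lp.coeFn_smul (Rη t s) ((hθl2 s).toLp (θ s)),
        (hθl2 s).coeFn_toLp] with ω h1 h2
      rw [h1, Pi.smul_apply, h2, smul_eq_mul]
    filter_upwards [(hgmem t).coeFn_toLp,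
      hcoesum t (fun s => Rη t s • (hθl2 s).toLp (θ s)), h1] with ω e1 e2 e3
    rw [e1, e2]
    exact (Finset.sum_congr rfl e3).symm
  -- the key recursion in Lp
  have key : ∀ t : ℕ,
      (hθl2 (t+1)).toLp (θ (t+1)) = (hθl2 t).toLp (θ t) + γ •
        (-(lam • (hθl2 t).toLp (θ t)) - (δ * Γ t) • (hθl2 t).toLp (θ t)
          - (hgmem t).toLp _ - Rd t • (hθl2 0).toLp (θ 0)
          - (Rs t + Rdd t) • hθstar.toLp θstar + (hul2 t).toLp (u t)) := by
    intro t
    have hw : MemLp (θ t + γ • (-(lam • θ t) - (δ * Γ t) • θ t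
        - (fun ω => ∑ s ∈ Finset.range t, Rη t s * θ s ω) - Rd t • θ 0
        - (Rs t + Rdd t) • θstar + u t)) 2 P :=
      (hθl2 t).add (((((((((hθl2 t).const_smul lam).neg).sub
        ((hθl2 t).const_smul (δ * Γ t))).sub (hgmem t)).sub
        ((hθl2 0).const_smul (Rd t))).sub
        (hθstar.const_smul (Rs t + Rdd t))).add (hul2 t)).const_smul γ)
    refine (MemLp.toLp_congr (hθl2 (t+1)) hw ?_).trans rfl
    filter_upwards [heq t] with ω h
    simp only [Pi.add_apply, Pi.sub_apply, Pi.neg_apply, Pi.smul_apply, smul_eq_mul]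
    linear_combination h
  -- convergence of the coefficient sums (Tannery)
  have hatend : Tendsto (fun t : ℕ => ∑ s ∈ Finset.range t, Rη t s) atTop
      (nhds (∑' k : ℕ, Rlim (k + 1))) := by
    set f : ℕ → ℕ → ℝ := fun t k => if k + 1 ≤ t then Rη t (t - (k + 1)) else 0 with hf
    have hmain : Tendsto (fun t => ∑' k, f t k) atTop (nhds (∑' k, Rlim (k + 1))) := by
      refine tendsto_tsum_of_dominated_convergence hbd_sum ?_ (Eventually.of_forall ?_)
      · intro k
        have h1 := (hRηlim (k + 1) (Nat.le_add_left 1 k)).comp (tendsto_sub_atTop_nat (k + 1))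
        refine Tendsto.congr' ?_ h1
        filter_upwards [eventually_ge_atTop (k + 1)] with t ht
        simp only [hf, Function.comp_apply]
        rw [if_pos ht, Nat.sub_add_cancel ht]
      · intro t k
        simp only [hf]
        split_ifs with h
        · have hb := hRηbound (t - (k + 1)) (k + 1) (Nat.le_add_left 1 k)
          rw [Nat.sub_add_cancel h] at hb
          rw [Real.norm_eq_abs]
          refine hb.trans (le_of_eq ?_)
          congr 2
          push_cast
          ring
        · simp only [norm_zero]
          positivity
    refine hmain.congr fun t => ?_
    rw [tsum_eq_sum (s := Finset.range t) (f := f t)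
      (fun k hk => by simp only [hf]; rw [if_neg]; simp at hk; omega)]
    calc ∑ k ∈ Finset.range t, f t k = ∑ k ∈ Finset.range t, Rη t (t - 1 - k) := by
          refine Finset.sum_congr rfl fun k hk => ?_
          simp only [hf]
          have hk' := Finset.mem_range.mp hk
          rw [if_pos (by omega)]
          congr 1
          omega
      _ = ∑ s ∈ Finset.range t, Rη t s := Finset.sum_range_reflect _ t
  -- first half of sum convergence in Lp
  have hS1 : Tendsto (fun t : ℕ => ∑ s ∈ Finset.range t,
      Rη t s • ((hθl2 s).toLp (θ s) - hθinf.toLp θinf)) atTop (nhds 0) := by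
    have hbig : Tendsto (fun t : ℕ => (t : ℝ) * (C ^ 2 * Real.exp (-c * t))) atTop (nhds 0) := by
      have h1 := (Real.tendsto_pow_mul_exp_neg_atTop_nhds_zero 1).comp
        (tendsto_natCast_atTop_atTop.const_mul_atTop hc)
      have h2 := h1.const_mul (C ^ 2 / c)
      rw [mul_zero] at h2
      refine h2.congr fun t => ?_
      have hc' : c ≠ 0 := ne_of_gt hc
      simp only [Function.comp_apply]
      rw [pow_one, show -(c * (t : ℝ)) = -c * t by ring]
      field_simp
    refine squeeze_zero_norm (fun t => ?_) hbig
    calc ‖∑ s ∈ Finset.range t, Rη t s • ((hθl2 s).toLp (θ s) - hθinf.toLp θinf)‖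
        ≤ ∑ s ∈ Finset.range t, ‖Rη t s • ((hθl2 s).toLp (θ s) - hθinf.toLp θinf)‖ :=
          norm_sum_le _ _
      _ ≤ ∑ s ∈ Finset.range t, C ^ 2 * Real.exp (-c * t) := by
          refine Finset.sum_le_sum fun s hs => ?_
          rw [norm_smul, Real.norm_eq_abs]
          have hst : s < t := Finset.mem_range.mp hs
          have hb1 : |Rη t s| ≤ C * Real.exp (-c * ((t - s : ℕ) : ℝ)) := by
            have h := hRηbound s (t - s) (by omega)
            rwa [Nat.add_sub_cancel' hst.le] at h
          have hmm := mul_le_mul hb1 (hXnorm s) (norm_nonneg _) (by positivity)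
          refine hmm.trans (le_of_eq ?_)
          rw [Nat.cast_sub hst.le, mul_mul_mul_comm, ← Real.exp_add, ← pow_two]
          congr 1
          ring
      _ = (t : ℝ) * (C ^ 2 * Real.exp (-c * t)) := by
          rw [Finset.sum_const, Finset.card_range, nsmul_eq_mul]
  -- convergence of the Lp sum term
  have hStend : Tendsto (fun t : ℕ => (hgmem t).toLp _) atTop
      (nhds ((∑' k : ℕ, Rlim (k + 1)) • hθinf.toLp θinf)) := by
    have hdec : ∀ t : ℕ, (hgmem t).toLp _
        = (∑ s ∈ Finset.range t, Rη t s • ((hθl2 s).toLp (θ s) - hθinf.toLp θinf))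
          + (∑ s ∈ Finset.range t, Rη t s) • hθinf.toLp θinf := by
      intro t
      rw [hS_eq t, Finset.sum_smul]
      simp [smul_sub, Finset.sum_sub_distrib]
    have hlim := hS1.add (hatend.smul (tendsto_const_nhds (x := hθinf.toLp θinf)))
    rw [zero_add] at hlim
    exact Tendsto.congr (fun t => (hdec t).symm) hlim
  -- the drift tends to zero
  have hW0 : Tendsto (fun t : ℕ => -(lam • (hθl2 t).toLp (θ t))
      - (δ * Γ t) • (hθl2 t).toLp (θ t) - (hgmem t).toLp _
      - Rd t • (hθl2 0).toLp (θ 0) - (Rs t + Rdd t) • hθstar.toLp θstar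
      + (hul2 t).toLp (u t)) atTop (nhds 0) := by
    have h1 : Tendsto (fun t : ℕ => γ⁻¹ • ((hθl2 (t+1)).toLp (θ (t+1)) - (hθl2 t).toLp (θ t)))
        atTop (nhds (γ⁻¹ • (hθinf.toLp θinf - hθinf.toLp θinf))) :=
      ((hXtend.comp (tendsto_add_atTop_nat 1)).sub hXtend).const_smul γ⁻¹
    rw [sub_self, smul_zero] at h1
    refine h1.congr fun t => ?_
    rw [key t, add_sub_cancel_left, smul_smul, inv_mul_cancel₀ (ne_of_gt hγ), one_smul]
  -- the drift tends to the limit expression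
  have hWlim : Tendsto (fun t : ℕ => -(lam • (hθl2 t).toLp (θ t))
      - (δ * Γ t) • (hθl2 t).toLp (θ t) - (hgmem t).toLp _
      - Rd t • (hθl2 0).toLp (θ 0) - (Rs t + Rdd t) • hθstar.toLp θstar
      + (hul2 t).toLp (u t)) atTop (nhds (-(lam • hθinf.toLp θinf)
      - (δ * Γinf) • hθinf.toLp θinf - (∑' k : ℕ, Rlim (k + 1)) • hθinf.toLp θinf
      - (0 : ℝ) • (hθl2 0).toLp (θ 0) - (Rsinf + 0) • hθstar.toLp θstar
      + huinf.toLp uinf)) := by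
    refine Tendsto.add (Tendsto.sub (Tendsto.sub (Tendsto.sub (Tendsto.sub
      (Tendsto.neg (hXtend.const_smul lam))
      (Tendsto.smul (tendsto_const_nhds.mul hΓ) hXtend)) hStend)
      (Tendsto.smul hRd tendsto_const_nhds)) (Tendsto.smul (hRs.add hRdd) tendsto_const_nhds))
      hUtend
  have hfinal := tendsto_nhds_unique hWlim hW0
  have hmemW : MemLp (-(lam • θinf) - (δ * Γinf) • θinf
      - (∑' k : ℕ, Rlim (k + 1)) • θinf - (0 : ℝ) • θ 0
      - (Rsinf + 0) • θstar + uinf) 2 P :=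
    ((((((hθinf.const_smul lam).neg).sub (hθinf.const_smul (δ * Γinf))).sub
      (hθinf.const_smul (∑' k : ℕ, Rlim (k + 1)))).sub
      ((hθl2 0).const_smul (0 : ℝ))).sub (hθstar.const_smul (Rsinf + 0))).add huinf
  have hcoe : (-(lam • hθinf.toLp θinf) - (δ * Γinf) • hθinf.toLp θinf
      - (∑' k : ℕ, Rlim (k + 1)) • hθinf.toLp θinf
      - (0 : ℝ) • (hθl2 0).toLp (θ 0) - (Rsinf + 0) • hθstar.toLp θstar
      + huinf.toLp uinf) = hmemW.toLp _ := rfl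
  rw [hcoe] at hfinal
  have hae : (-(lam • θinf) - (δ * Γinf) • θinf
      - (∑' k : ℕ, Rlim (k + 1)) • θinf - (0 : ℝ) • θ 0
      - (Rsinf + 0) • θstar + uinf) =ᵐ[P] 0 := by
    have h := hmemW.coeFn_toLp
    rw [hfinal] at h
    exact (h.symm.trans (Lp.coeFn_zero ℝ 2 P)).symm.symm
  filter_upwards [hae] with ω h
  simp only [Pi.add_apply, Pi.sub_apply, Pi.neg_apply, Pi.smul_apply, Pi.zero_apply,
    smul_eq_mul] at h
  linear_combination -h
end
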